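/- Let a ∈ (0,1) and α ∈ (0,π), set c := 2·cot²α/(1−a) − 1, and suppose c > 0. Define r := (√(2(1−a)) / sin α) · [√(1+c) + (1/(2√c))·log((√(1+c) + √c)/(√(1+c) − √c))]^{-1} (note (1/2)·log((√(1+c)+√c)/(√(1+c)−√c)) = arcsinh √c). Then r satisfies the non-steerability boundary equation for displaced T-states with degenerate correlation eigenvalues t₁' = t₂' = r sin α/√2, t₃' = r cos α: (1/2π) ∫_{S²} √( r² sin²α (x₁² + x₂²) / (2(1−a)) + r² cos²α · x₃² / (1−a)² ) dσ(x) = 1. -/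

import Mathlib

open MeasureTheory

noncomputable section

/-- The unit sphere `S²` in `ℝ³`. -/
abbrev S2 : Set (EuclideanSpace ℝ (Fin 3)) := Metric.sphere (0 : EuclideanSpace ℝ (Fin 3)) 1

/-- The surface measure `σ` on the unit sphere `S² ⊂ ℝ³`; it is the 2-dimensional
(Hausdorff) surface measure, with total mass `4π`. -/
def sphereMeasure : Measure (Metric.sphere (0 : EuclideanSpace ℝ (Fin 3)) 1) :=
  (volume : Measure (EuclideanSpace ℝ (Fin 3))).toSphere

namespace DTBaux

open Metric Set Real

abbrev E3 := EuclideanSpace ℝ (Fin 3)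

def F (A B : ℝ) (x : E3) : ℝ := Real.sqrt (A * (x 0 ^ 2 + x 1 ^ 2) + B * x 2 ^ 2)

lemma F_homog (A B : ℝ) (t : ℝ) (ht : 0 ≤ t) (x : E3) :
    F A B (t • x) = t * F A B x := by
  unfold F
  have h : ∀ i : Fin 3, (t • x) i = t * x i := fun i => rfl
  rw [h, h, h, show A * ((t * x 0) ^ 2 + (t * x 1) ^ 2) + B * (t * x 2) ^ 2
      = t ^ 2 * (A * (x 0 ^ 2 + x 1 ^ 2) + B * x 2 ^ 2) by ring,
    Real.sqrt_mul (sq_nonneg t), Real.sqrt_sq ht]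

lemma integral_volumeIoiPow (n : ℕ) (g : ℝ → ℝ) :
    ∫ r : Ioi (0:ℝ), g r ∂(Measure.volumeIoiPow n)
      = ∫ y in Ioi (0:ℝ), y ^ n * g y := by
  rw [Measure.volumeIoiPow]
  simp only [ENNReal.ofReal]
  rw [integral_withDensity_eq_integral_smul
      ((measurable_subtype_coe.pow_const _).real_toNNReal),
    integral_subtype_comap measurableSet_Ioi (fun a : ℝ => Real.toNNReal (a ^ n) • g a)]
  refine setIntegral_congr_fun measurableSet_Ioi fun x hx => ?_
  rw [NNReal.smul_def, Real.coe_toNNReal _ (pow_nonneg hx.out.le _), smul_eq_mul]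

lemma ball_to_sphere (A B : ℝ) :
    ∫ x in ball (0:E3) 1, F A B x
      = (∫ ω : sphere (0:E3) 1, F A B ω ∂((volume : Measure E3).toSphere)) * (1/4) := by
  set f : E3 → ℝ := (ball (0:E3) 1).indicator (F A B) with hf
  have hdim : Module.finrank ℝ E3 = 3 := finrank_euclideanSpace_fin
  have step1 : ∫ x in ball (0:E3) 1, F A B x = ∫ x, f x := (integral_indicator measurableSet_ball).symm
  have step2 : ∫ x, f x = ∫ x : ({0}ᶜ : Set E3), f x ∂((volume : Measure E3).comap Subtype.val) := by
    rw [integral_subtype_comap (measurableSet_singleton (0:E3)).compl f,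
      MeasureTheory.restrict_compl_singleton]
  have mp := (volume : Measure E3).measurePreserving_homeomorphUnitSphereProd
  rw [hdim] at mp
  have step3 : ∫ x : ({0}ᶜ : Set E3), f x ∂((volume : Measure E3).comap Subtype.val)
      = ∫ p : sphere (0:E3) 1 × Ioi (0:ℝ), f ((p.2 : ℝ) • (p.1 : E3))
          ∂((volume : Measure E3).toSphere.prod (Measure.volumeIoiPow (3 - 1))) := by
    rw [← mp.integral_comp (Homeomorph.measurableEmbedding _)
        (fun p : sphere (0:E3) 1 × Ioi (0:ℝ) => f ((p.2 : ℝ) • (p.1 : E3)))]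
    refine integral_congr_ae (Filter.Eventually.of_forall fun x => ?_)
    simp only [homeomorphUnitSphereProd_apply_fst_coe, homeomorphUnitSphereProd_apply_snd_coe]
    congr 1
    rw [smul_smul, mul_inv_cancel₀ (norm_ne_zero_iff.2 x.2), one_smul]
  have step4 : ∀ p : sphere (0:E3) 1 × Ioi (0:ℝ),
      f ((p.2 : ℝ) • (p.1 : E3)) = F A B p.1 * (if (p.2 : ℝ) < 1 then (p.2 : ℝ) else 0) := by
    rintro ⟨ω, r⟩
    have hr : (0:ℝ) < r := r.2
    have hmem : (r : ℝ) • (ω : E3) ∈ ball (0:E3) 1 ↔ (r : ℝ) < 1 := by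
      rw [mem_ball_zero_iff, norm_smul, mem_sphere_zero_iff_norm.1 ω.2, mul_one,
        Real.norm_eq_abs, abs_of_pos hr]
    rw [hf]
    by_cases h : (r : ℝ) < 1
    · rw [indicator_of_mem (hmem.2 h), F_homog A B r hr.le, if_pos h, mul_comm]
    · rw [indicator_of_notMem (fun hm => h (hmem.1 hm)), if_neg h, mul_zero]
  have step5 : ∫ p : sphere (0:E3) 1 × Ioi (0:ℝ), f ((p.2 : ℝ) • (p.1 : E3))
          ∂((volume : Measure E3).toSphere.prod (Measure.volumeIoiPow (3 - 1)))
      = (∫ ω : sphere (0:E3) 1, F A B ω ∂((volume : Measure E3).toSphere)) *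
          (∫ r : Ioi (0:ℝ), (if (r : ℝ) < 1 then (r : ℝ) else 0) ∂(Measure.volumeIoiPow 2)) := by
    rw [← integral_prod_mul]
    exact integral_congr_ae (Filter.Eventually.of_forall fun p => step4 p)
  have step6 : (∫ r : Ioi (0:ℝ), (if (r : ℝ) < 1 then (r : ℝ) else 0)
      ∂(Measure.volumeIoiPow 2)) = 1/4 := by
    rw [integral_volumeIoiPow 2 (fun y => if y < 1 then y else 0)]
    have : ∀ y ∈ Ioi (0:ℝ), y ^ 2 * (if y < 1 then y else 0)
        = (Iio (1:ℝ)).indicator (fun y => y ^ 3) y := by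
      intro y hy
      by_cases h : y < 1
      · rw [if_pos h, indicator_of_mem (mem_Iio.mpr h)]; ring
      · rw [if_neg h, indicator_of_notMem (fun hm => h (mem_Iio.mp hm)), mul_zero]
    rw [setIntegral_congr_fun measurableSet_Ioi this,
      setIntegral_indicator measurableSet_Iio,
      show Ioi (0:ℝ) ∩ Iio 1 = Ioo 0 1 from rfl,
      ← integral_Ioc_eq_integral_Ioo, ← intervalIntegral.integral_of_le zero_le_one,
      integral_pow]
    norm_num
  rw [step1, step2, step3, step5, step6]

lemma radial_integral (A B z R : ℝ) (hA : 0 < A) (hBz : 0 < B * z ^ 2) :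
    ∫ r in (0:ℝ)..R, r * Real.sqrt (A * r ^ 2 + B * z ^ 2)
      = ((A * R ^ 2 + B * z ^ 2) * Real.sqrt (A * R ^ 2 + B * z ^ 2)
          - (B * z ^ 2) * Real.sqrt (B * z ^ 2)) / (3 * A) := by
  have key : ∀ r : ℝ, HasDerivAt (fun r => (A * r ^ 2 + B * z ^ 2) *
      Real.sqrt (A * r ^ 2 + B * z ^ 2) / (3 * A)) (r * Real.sqrt (A * r ^ 2 + B * z ^ 2)) r := by
    intro r
    have ht : 0 < A * r ^ 2 + B * z ^ 2 := by nlinarith [sq_nonneg r]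
    have h1 : HasDerivAt (fun r : ℝ => A * r ^ 2 + B * z ^ 2) (A * (2 * r)) r := by
      simpa using ((hasDerivAt_pow 2 r).const_mul A).add_const (B * z ^ 2)
    have h2 := h1.sqrt ht.ne'
    have h3 := (h1.mul h2).div_const (3 * A)
    refine h3.congr_deriv ?_
    symm
    have hs : Real.sqrt (A * r ^ 2 + B * z ^ 2) ^ 2 = A * r ^ 2 + B * z ^ 2 :=
      Real.sq_sqrt ht.le
    have hs0 : Real.sqrt (A * r ^ 2 + B * z ^ 2) ≠ 0 := by positivity
    generalize hS : Real.sqrt (A * r ^ 2 + B * z ^ 2) = S at hs hs0 ⊢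
    field_simp
    linear_combination r * hs
  rw [intervalIntegral.integral_eq_sub_of_hasDerivAt (fun r _ => key r)
      (by apply Continuous.intervalIntegrable; fun_prop)]
  simp
  ring

lemma antideriv_main (c : ℝ) (hc : 0 < c) (z : ℝ) :
    HasDerivAt (fun z : ℝ => z * (1 + c * z ^ 2) * Real.sqrt (1 + c * z ^ 2) / 4
        + 3 / 8 * (z * Real.sqrt (1 + c * z ^ 2))
        + 3 / 8 * (Real.sqrt c)⁻¹ * Real.log (Real.sqrt c * z + Real.sqrt (1 + c * z ^ 2)))
      ((1 + c * z ^ 2) * Real.sqrt (1 + c * z ^ 2)) z := by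
  have hw : 0 < 1 + c * z ^ 2 := by nlinarith [sq_nonneg z]
  set s := Real.sqrt (1 + c * z ^ 2) with hsdef
  have hs2 : s ^ 2 = 1 + c * z ^ 2 := Real.sq_sqrt hw.le
  have hs0 : 0 < s := Real.sqrt_pos.2 hw
  have hq2 : Real.sqrt c ^ 2 = c := Real.sq_sqrt hc.le
  have hq0 : 0 < Real.sqrt c := Real.sqrt_pos.2 hc
  have hu : 0 < Real.sqrt c * z + s := by
    have h2 : Real.sqrt (c * z ^ 2) < s := by
      apply Real.sqrt_lt_sqrt (by positivity)
      linarith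
    have h3 : Real.sqrt (c * z ^ 2) = Real.sqrt c * |z| := by
      rw [Real.sqrt_mul hc.le, Real.sqrt_sq_eq_abs]
    nlinarith [neg_abs_le z, hq0]
  have h1 : HasDerivAt (fun z : ℝ => 1 + c * z ^ 2) (c * (2 * z)) z := by
    simpa using ((hasDerivAt_pow 2 z).const_mul c).const_add 1
  have hsq := h1.sqrt hw.ne'
  -- term 1
  have t1 : HasDerivAt (fun z : ℝ => z * (1 + c * z ^ 2) * Real.sqrt (1 + c * z ^ 2) / 4)
      ((1 + 4 * c * z ^ 2) * s / 4) z := by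
    have := (((hasDerivAt_id z).mul h1).mul hsq).div_const 4
    refine this.congr_deriv ?_
    symm
    simp only [id, Pi.mul_apply, ← hsdef]
    field_simp
    linear_combination c * z ^ 2 * hs2
  -- term 2
  have t2 : HasDerivAt (fun z : ℝ => 3 / 8 * (z * Real.sqrt (1 + c * z ^ 2)))
      (3 / 8 * (s + c * z ^ 2 / s)) z := by
    have := ((hasDerivAt_id z).mul hsq).const_mul (3/8 : ℝ)
    refine this.congr_deriv ?_
    symm
    simp only [id, Pi.mul_apply, ← hsdef]
    field_simp
  -- term 3
  have t3 : HasDerivAt (fun z : ℝ => 3 / 8 * (Real.sqrt c)⁻¹ *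
      Real.log (Real.sqrt c * z + Real.sqrt (1 + c * z ^ 2))) (3 / (8 * s)) z := by
    have hinner : HasDerivAt (fun z : ℝ => Real.sqrt c * z + Real.sqrt (1 + c * z ^ 2))
        (Real.sqrt c + c * (2 * z) / (2 * s)) z := by
      exact (((hasDerivAt_id z).const_mul (Real.sqrt c)).add hsq).congr_deriv (by rw [mul_one])
    have := (hinner.log hu.ne').const_mul (3 / 8 * (Real.sqrt c)⁻¹)
    refine this.congr_deriv ?_
    symm
    simp only [← hsdef]
    field_simp
    linear_combination z * hq2
  have total := (t1.add t2).add t3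
  refine total.congr_deriv ?_
  symm
  field_simp
  linear_combination 12 * hs2

lemma integral_main (c : ℝ) (hc : 0 < c) :
    ∫ z in (-1:ℝ)..1, (1 + c * z ^ 2) * Real.sqrt (1 + c * z ^ 2)
      = (1 + c) * Real.sqrt (1 + c) / 2 + 3 / 4 * Real.sqrt (1 + c)
        + 3 / 4 * (Real.sqrt c)⁻¹ * Real.log (Real.sqrt c + Real.sqrt (1 + c)) := by
  have hp0 : 0 < Real.sqrt (1 + c) := Real.sqrt_pos.2 (by linarith)
  have hq0 : 0 < Real.sqrt c := Real.sqrt_pos.2 hc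
  have hp2 : Real.sqrt (1 + c) ^ 2 = 1 + c := Real.sq_sqrt (by linarith)
  have hq2 : Real.sqrt c ^ 2 = c := Real.sq_sqrt hc.le
  rw [intervalIntegral.integral_eq_sub_of_hasDerivAt (fun z _ => antideriv_main c hc z)
      (by apply Continuous.intervalIntegrable; fun_prop)]
  have hlog : Real.log (Real.sqrt c * (-1) + Real.sqrt (1 + c))
      = - Real.log (Real.sqrt c * 1 + Real.sqrt (1 + c)) := by
    have hmul : (Real.sqrt c * (-1) + Real.sqrt (1 + c))
        * (Real.sqrt c * 1 + Real.sqrt (1 + c)) = 1 := by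
      linear_combination hp2 - hq2
    rw [eq_inv_of_mul_eq_one_left hmul, Real.log_inv]
  have hlog2 : Real.log (-Real.sqrt c + Real.sqrt (1 + c))
      = - Real.log (Real.sqrt c + Real.sqrt (1 + c)) := by
    rw [show -Real.sqrt c + Real.sqrt (1 + c) = Real.sqrt c * (-1) + Real.sqrt (1 + c) by ring,
      hlog]
    norm_num
  norm_num
  rw [hlog2]
  ring

lemma integral_cube : ∫ z in (-1:ℝ)..1, z ^ 2 * |z| = 1 / 2 := by
  have h1 : IntervalIntegrable (fun z : ℝ => z ^ 2 * |z|) volume (-1) 0 := by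
    apply Continuous.intervalIntegrable; fun_prop
  have h2 : IntervalIntegrable (fun z : ℝ => z ^ 2 * |z|) volume 0 1 := by
    apply Continuous.intervalIntegrable; fun_prop
  rw [← intervalIntegral.integral_add_adjacent_intervals h1 h2]
  have e1 : ∫ z in (-1:ℝ)..0, z ^ 2 * |z| = ∫ z in (-1:ℝ)..0, -(z ^ 3) := by
    apply intervalIntegral.integral_congr
    intro z hz
    rw [uIcc_of_le (by norm_num)] at hz
    simp only [abs_of_nonpos hz.2]
    ring
  have e2 : ∫ z in (0:ℝ)..1, z ^ 2 * |z| = ∫ z in (0:ℝ)..1, z ^ 3 := by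
    apply intervalIntegral.integral_congr
    intro z hz
    rw [uIcc_of_le (by norm_num)] at hz
    simp only [abs_of_nonneg hz.1]
    ring
  rw [e1, e2, intervalIntegral.integral_neg, integral_pow, integral_pow]
  norm_num

lemma inner_disk (A B z : ℝ) (hA : 0 < A) (hB : 0 < B) (hz : z ≠ 0) :
    ∫ p : ℝ × ℝ, (if z ^ 2 + (p.1 ^ 2 + p.2 ^ 2) < 1 then
        Real.sqrt (A * (p.1 ^ 2 + p.2 ^ 2) + B * z ^ 2) else 0)
      = (2 * π / (3 * A)) * (if z ^ 2 < 1 then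
          ((A * (1 - z ^ 2) + B * z ^ 2) * Real.sqrt (A * (1 - z ^ 2) + B * z ^ 2)
            - (B * z ^ 2) * Real.sqrt (B * z ^ 2)) else 0) := by
  have hBz : 0 < B * z ^ 2 := by positivity
  rw [← integral_comp_polarCoord_symm (fun p : ℝ × ℝ =>
    if z ^ 2 + (p.1 ^ 2 + p.2 ^ 2) < 1 then
      Real.sqrt (A * (p.1 ^ 2 + p.2 ^ 2) + B * z ^ 2) else 0)]
  have htar : polarCoord.target = Ioi (0:ℝ) ×ˢ Ioo (-π) π := rfl
  have hcong : ∀ p ∈ polarCoord.target,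
      p.1 • (if z ^ 2 + ((polarCoord.symm p).1 ^ 2 + (polarCoord.symm p).2 ^ 2) < 1 then
        Real.sqrt (A * ((polarCoord.symm p).1 ^ 2 + (polarCoord.symm p).2 ^ 2) + B * z ^ 2) else 0)
      = (fun r : ℝ => r * (if r ^ 2 < 1 - z ^ 2 then
          Real.sqrt (A * r ^ 2 + B * z ^ 2) else 0)) p.1 * (fun _ : ℝ => (1:ℝ)) p.2 := by
    rintro ⟨r, θ⟩ _
    have hrt : (polarCoord.symm (r, θ)).1 ^ 2 + (polarCoord.symm (r, θ)).2 ^ 2 = r ^ 2 := by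
      have : polarCoord.symm (r, θ) = (r * Real.cos θ, r * Real.sin θ) := rfl
      rw [this]
      linear_combination (r ^ 2) * Real.sin_sq_add_cos_sq θ
    rw [hrt, smul_eq_mul]
    have : z ^ 2 + r ^ 2 < 1 ↔ r ^ 2 < 1 - z ^ 2 := by constructor <;> intro <;> linarith
    simp only [this, mul_one]
  rw [setIntegral_congr_fun (by rw [htar]; exact measurableSet_Ioi.prod measurableSet_Ioo) hcong,
    htar, Measure.volume_eq_prod,
    setIntegral_prod_mul (fun r : ℝ => r * (if r ^ 2 < 1 - z ^ 2 then
      Real.sqrt (A * r ^ 2 + B * z ^ 2) else 0)) (fun _ : ℝ => (1:ℝ)) (Ioi 0) (Ioo (-π) π)]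
  have hsnd : ∫ θ in Ioo (-π) π, (1:ℝ) = 2 * π := by
    rw [setIntegral_const, Real.volume_real_Ioo_of_le (by linarith [Real.pi_pos] : -π ≤ π), smul_eq_mul]
    ring
  rw [hsnd]
  by_cases hz2 : z ^ 2 < 1
  · have h1z : (0:ℝ) < 1 - z ^ 2 := by linarith
    have hR0 : 0 < Real.sqrt (1 - z ^ 2) := Real.sqrt_pos.2 h1z
    have hcong2 : ∀ r ∈ Ioi (0:ℝ),
        r * (if r ^ 2 < 1 - z ^ 2 then Real.sqrt (A * r ^ 2 + B * z ^ 2) else 0)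
        = (Iio (Real.sqrt (1 - z ^ 2))).indicator
            (fun r => r * Real.sqrt (A * r ^ 2 + B * z ^ 2)) r := by
      intro r hr
      have : r ^ 2 < 1 - z ^ 2 ↔ r < Real.sqrt (1 - z ^ 2) :=
        ((Real.lt_sqrt (le_of_lt hr)).symm)
      by_cases h : r ^ 2 < 1 - z ^ 2
      · rw [if_pos h, indicator_of_mem (mem_Iio.2 (this.1 h))]
      · rw [if_neg h, indicator_of_notMem (fun hm => h (this.2 (mem_Iio.1 hm))), mul_zero]
    rw [setIntegral_congr_fun measurableSet_Ioi hcong2,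
      setIntegral_indicator measurableSet_Iio,
      show Ioi (0:ℝ) ∩ Iio (Real.sqrt (1 - z ^ 2)) = Ioo 0 (Real.sqrt (1 - z ^ 2)) from rfl,
      ← integral_Ioc_eq_integral_Ioo, ← intervalIntegral.integral_of_le hR0.le,
      radial_integral A B z _ hA hBz, Real.sq_sqrt h1z.le, if_pos hz2]
    ring
  · have hcong2 : ∀ r ∈ Ioi (0:ℝ),
        r * (if r ^ 2 < 1 - z ^ 2 then Real.sqrt (A * r ^ 2 + B * z ^ 2) else 0)
        = (0:ℝ) := by
      intro r hr
      rw [if_neg (by nlinarith [sq_nonneg r]), mul_zero]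
    rw [setIntegral_congr_fun measurableSet_Ioi hcong2, if_neg hz2]
    simp

lemma F_cont (A B : ℝ) : Continuous (F A B) := by
  unfold F; fun_prop

def Hfun (A B : ℝ) : ℝ × (Fin 2 → ℝ) → ℝ := fun q =>
  if q.1 ^ 2 + ((q.2 0) ^ 2 + (q.2 1) ^ 2) < 1 then
    Real.sqrt (A * ((q.2 0) ^ 2 + (q.2 1) ^ 2) + B * q.1 ^ 2) else 0

def e3equiv : E3 ≃ᵐ ℝ × (Fin 2 → ℝ) :=
  (MeasurableEquiv.toLp 2 (Fin 3 → ℝ)).symm.trans (MeasurableEquiv.piFinSuccAbove (fun _ => ℝ) 2)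

lemma e3equiv_mp : MeasurePreserving e3equiv volume volume :=
  (volume_preserving_piFinSuccAbove (fun _ : Fin 3 => ℝ) 2).comp
    (EuclideanSpace.volume_preserving_symm_measurableEquiv_toLp (Fin 3))

lemma e3equiv_apply (x : E3) :
    e3equiv x = (x 2, fun j => x (Fin.succAbove 2 j)) := rfl

lemma hcomp (A B : ℝ) (x : E3) :
    Hfun A B (e3equiv x) = (ball (0:E3) 1).indicator (F A B) x := by
  have h0 : x (Fin.succAbove 2 (0 : Fin 2)) = x 0 := rfl
  have h1 : x (Fin.succAbove 2 (1 : Fin 2)) = x 1 := rfl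
  have hmem : x ∈ ball (0:E3) 1 ↔ x 0 ^ 2 + x 1 ^ 2 + x 2 ^ 2 < 1 := by
    rw [mem_ball_zero_iff, EuclideanSpace.norm_eq]
    rw [Fin.sum_univ_three]
    simp only [Real.norm_eq_abs, sq_abs]
    rw [Real.sqrt_lt' one_pos]
    norm_num
  rw [Hfun, e3equiv_apply]
  simp only [h0, h1]
  by_cases h : x 0 ^ 2 + x 1 ^ 2 + x 2 ^ 2 < 1
  · rw [if_pos (by linarith), indicator_of_mem (hmem.2 h)]
    rw [F]
  · rw [if_neg (by intro hh; exact h (by linarith)),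
      indicator_of_notMem (fun hm => h (hmem.1 hm))]

lemma integrable_indicator_F (A B : ℝ) :
    Integrable ((ball (0:E3) 1).indicator (F A B)) := by
  rw [integrable_indicator_iff measurableSet_ball]
  exact (((F_cont A B).continuousOn).integrableOn_compact (isCompact_closedBall 0 1)).mono_set
    ball_subset_closedBall

lemma ball_eq_iterated (A B : ℝ) :
    ∫ x in ball (0:E3) 1, F A B x
      = ∫ z : ℝ, ∫ p : ℝ × ℝ, (if z ^ 2 + (p.1 ^ 2 + p.2 ^ 2) < 1 then
          Real.sqrt (A * (p.1 ^ 2 + p.2 ^ 2) + B * z ^ 2) else 0) := by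
  have hint : Integrable (Hfun A B) volume := by
    rw [← e3equiv_mp.integrable_comp_emb e3equiv.measurableEmbedding]
    exact (integrable_indicator_F A B).congr
      (Filter.Eventually.of_forall fun x => (hcomp A B x).symm)
  have step1 : ∫ x in ball (0:E3) 1, F A B x = ∫ x : E3, (ball (0:E3) 1).indicator (F A B) x :=
    (integral_indicator measurableSet_ball).symm
  have step2 : ∫ x : E3, (ball (0:E3) 1).indicator (F A B) x = ∫ q, Hfun A B q := by
    rw [← e3equiv_mp.integral_comp e3equiv.measurableEmbedding (Hfun A B)]
    exact integral_congr_ae (Filter.Eventually.of_forall fun x => (hcomp A B x).symm)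
  have hintp : Integrable (Hfun A B) (volume.prod volume) := by
    rwa [← Measure.volume_eq_prod]
  have step3 : ∫ q, Hfun A B q = ∫ z : ℝ, ∫ y : Fin 2 → ℝ, Hfun A B (z, y) := by
    rw [Measure.volume_eq_prod, integral_prod _ hintp]
  have step4 : ∀ z : ℝ, ∫ y : Fin 2 → ℝ, Hfun A B (z, y)
      = ∫ p : ℝ × ℝ, (if z ^ 2 + (p.1 ^ 2 + p.2 ^ 2) < 1 then
          Real.sqrt (A * (p.1 ^ 2 + p.2 ^ 2) + B * z ^ 2) else 0) := by
    intro z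
    rw [← (volume_preserving_finTwoArrow ℝ).integral_comp
        (MeasurableEquiv.finTwoArrow).measurableEmbedding
        (fun p : ℝ × ℝ => (if z ^ 2 + (p.1 ^ 2 + p.2 ^ 2) < 1 then
          Real.sqrt (A * (p.1 ^ 2 + p.2 ^ 2) + B * z ^ 2) else 0))]
    refine integral_congr_ae (Filter.Eventually.of_forall fun y => ?_)
    simp only [MeasurableEquiv.finTwoArrow_apply]
    rfl
  rw [step1, step2, step3]
  exact integral_congr_ae (Filter.Eventually.of_forall fun z => step4 z)

lemma ball_value (A c : ℝ) (hA : 0 < A) (hc : 0 < c) :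
    ∫ x in ball (0:E3) 1, F A (A * (1 + c)) x
      = π / 2 * Real.sqrt A * (Real.sqrt (1 + c)
          + (Real.sqrt c)⁻¹ * Real.log (Real.sqrt c + Real.sqrt (1 + c))) := by
  set B := A * (1 + c) with hBdef
  have hB : 0 < B := by positivity
  rw [ball_eq_iterated]
  have hae : ∀ᵐ z : ℝ, z ≠ (0:ℝ) := by
    have := (Set.countable_singleton (0:ℝ)).ae_notMem (volume : Measure ℝ)
    filter_upwards [this] with z hz
    simpa using hz
  have step1 : ∫ z : ℝ, (∫ p : ℝ × ℝ, (if z ^ 2 + (p.1 ^ 2 + p.2 ^ 2) < 1 then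
          Real.sqrt (A * (p.1 ^ 2 + p.2 ^ 2) + B * z ^ 2) else 0))
      = ∫ z : ℝ, (2 * π / (3 * A)) * (if z ^ 2 < 1 then
          ((A * (1 - z ^ 2) + B * z ^ 2) * Real.sqrt (A * (1 - z ^ 2) + B * z ^ 2)
            - (B * z ^ 2) * Real.sqrt (B * z ^ 2)) else 0) := by
    refine integral_congr_ae ?_
    filter_upwards [hae] with z hz
    exact inner_disk A B z hA hB hz
  rw [step1, integral_const_mul]
  have step2 : ∫ z : ℝ, (if z ^ 2 < 1 then
      ((A * (1 - z ^ 2) + B * z ^ 2) * Real.sqrt (A * (1 - z ^ 2) + B * z ^ 2)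
        - (B * z ^ 2) * Real.sqrt (B * z ^ 2)) else 0)
      = ∫ z in (-1:ℝ)..1,
      ((A * (1 - z ^ 2) + B * z ^ 2) * Real.sqrt (A * (1 - z ^ 2) + B * z ^ 2)
        - (B * z ^ 2) * Real.sqrt (B * z ^ 2)) := by
    have hind : ∀ z : ℝ, (if z ^ 2 < 1 then
        ((A * (1 - z ^ 2) + B * z ^ 2) * Real.sqrt (A * (1 - z ^ 2) + B * z ^ 2)
          - (B * z ^ 2) * Real.sqrt (B * z ^ 2)) else 0)
        = (Ioo (-1:ℝ) 1).indicator (fun z =>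
            (A * (1 - z ^ 2) + B * z ^ 2) * Real.sqrt (A * (1 - z ^ 2) + B * z ^ 2)
              - (B * z ^ 2) * Real.sqrt (B * z ^ 2)) z := by
      intro z
      have hiff : z ^ 2 < 1 ↔ z ∈ Ioo (-1:ℝ) 1 := by
        rw [mem_Ioo, ← abs_lt]
        constructor
        · intro h; nlinarith [abs_nonneg z, sq_abs z]
        · intro h; nlinarith [sq_abs z, abs_nonneg z]
      by_cases h : z ^ 2 < 1
      · rw [if_pos h, indicator_of_mem (hiff.1 h)]
      · rw [if_neg h, indicator_of_notMem (fun hm => h (hiff.2 hm))]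
    rw [integral_congr_ae (Filter.Eventually.of_forall hind), integral_indicator measurableSet_Ioo,
      ← integral_Ioc_eq_integral_Ioo, ← intervalIntegral.integral_of_le (by norm_num : (-1:ℝ) ≤ 1)]
  rw [step2]
  have i1 : IntervalIntegrable (fun z : ℝ =>
      (A * (1 - z ^ 2) + B * z ^ 2) * Real.sqrt (A * (1 - z ^ 2) + B * z ^ 2)) volume (-1) 1 := by
    apply Continuous.intervalIntegrable; fun_prop
  have i2 : IntervalIntegrable (fun z : ℝ =>
      (B * z ^ 2) * Real.sqrt (B * z ^ 2)) volume (-1) 1 := by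
    apply Continuous.intervalIntegrable; fun_prop
  rw [intervalIntegral.integral_sub i1 i2]
  have e1 : ∫ z in (-1:ℝ)..1,
      (A * (1 - z ^ 2) + B * z ^ 2) * Real.sqrt (A * (1 - z ^ 2) + B * z ^ 2)
      = A * Real.sqrt A * ((1 + c) * Real.sqrt (1 + c) / 2 + 3 / 4 * Real.sqrt (1 + c)
        + 3 / 4 * (Real.sqrt c)⁻¹ * Real.log (Real.sqrt c + Real.sqrt (1 + c))) := by
    have hcong : ∀ z : ℝ, (A * (1 - z ^ 2) + B * z ^ 2) * Real.sqrt (A * (1 - z ^ 2) + B * z ^ 2)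
        = A * Real.sqrt A * ((1 + c * z ^ 2) * Real.sqrt (1 + c * z ^ 2)) := by
      intro z
      have h1 : A * (1 - z ^ 2) + B * z ^ 2 = A * (1 + c * z ^ 2) := by rw [hBdef]; ring
      rw [h1, Real.sqrt_mul hA.le]
      ring
    rw [intervalIntegral.integral_congr (fun z _ => hcong z),
      intervalIntegral.integral_const_mul, integral_main c hc]
  have e2 : ∫ z in (-1:ℝ)..1, (B * z ^ 2) * Real.sqrt (B * z ^ 2)
      = A * Real.sqrt A * ((1 + c) * Real.sqrt (1 + c)) * (1/2) := by
    have hcong : ∀ z : ℝ, (B * z ^ 2) * Real.sqrt (B * z ^ 2)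
        = (A * Real.sqrt A * ((1 + c) * Real.sqrt (1 + c))) * (z ^ 2 * |z|) := by
      intro z
      rw [Real.sqrt_mul hB.le, Real.sqrt_sq_eq_abs, hBdef,
        Real.sqrt_mul hA.le]
      ring
    rw [intervalIntegral.integral_congr (fun z _ => hcong z),
      intervalIntegral.integral_const_mul, integral_cube]
  rw [e1, e2]
  have hsA : Real.sqrt A ≠ 0 := by positivity
  field_simp
  ring

end DTBaux

open DTBaux Metric Set Real in
/-- Displaced T-state boundary, case `c > 0`: with `c = 2cot²α/(1−a) − 1` and
`r = (√(2(1−a))/sin α)·[√(1+c) + (1/(2√c))·log((√(1+c)+√c)/(√(1+c)−√c))]⁻¹`,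
`r` satisfies the non-steerability boundary equation
`(1/2π) ∫_{S²} √(r² sin²α (x₁²+x₂²)/(2(1−a)) + r² cos²α x₃²/(1−a)²) dσ = 1`. -/
theorem displaced_T_boundary_pos (a α c r : ℝ)
    (ha0 : 0 < a) (ha1 : a < 1) (hα0 : 0 < α) (hα1 : α < Real.pi)
    (hc : c = 2 * Real.cot α ^ 2 / (1 - a) - 1) (hcpos : 0 < c)
    (hr : r = Real.sqrt (2 * (1 - a)) / Real.sin α *
      (Real.sqrt (1 + c) + 1 / (2 * Real.sqrt c) *
        Real.log ((Real.sqrt (1 + c) + Real.sqrt c) /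
          (Real.sqrt (1 + c) - Real.sqrt c)))⁻¹) :
    (2 * Real.pi)⁻¹ *
      (∫ x : Metric.sphere (0 : EuclideanSpace ℝ (Fin 3)) 1,
        Real.sqrt (r ^ 2 * Real.sin α ^ 2 *
            ((x : EuclideanSpace ℝ (Fin 3)) 0 ^ 2 +
              (x : EuclideanSpace ℝ (Fin 3)) 1 ^ 2) / (2 * (1 - a)) +
          r ^ 2 * Real.cos α ^ 2 *
            (x : EuclideanSpace ℝ (Fin 3)) 2 ^ 2 / (1 - a) ^ 2) ∂sphereMeasure) = 1 := by
  have h1a : (0:ℝ) < 1 - a := by linarith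
  have hsin : 0 < Real.sin α := Real.sin_pos_of_pos_of_lt_pi hα0 hα1
  have hp0 : 0 < Real.sqrt (1 + c) := Real.sqrt_pos.2 (by linarith)
  have hq0 : 0 < Real.sqrt c := Real.sqrt_pos.2 hcpos
  have hp2 : Real.sqrt (1 + c) ^ 2 = 1 + c := Real.sq_sqrt (by linarith)
  have hq2 : Real.sqrt c ^ 2 = c := Real.sq_sqrt hcpos.le
  have hpq : 0 < Real.sqrt (1 + c) - Real.sqrt c := by
    have : Real.sqrt c < Real.sqrt (1 + c) := Real.sqrt_lt_sqrt hcpos.le (by linarith)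
    linarith
  -- log identity : K' = K
  have hprod : (Real.sqrt (1 + c) - Real.sqrt c) * (Real.sqrt (1 + c) + Real.sqrt c) = 1 := by
    linear_combination hp2 - hq2
  have hdiv : (Real.sqrt (1 + c) + Real.sqrt c) / (Real.sqrt (1 + c) - Real.sqrt c)
      = (Real.sqrt (1 + c) + Real.sqrt c) ^ 2 := by
    rw [div_eq_iff hpq.ne']
    linear_combination (-(Real.sqrt (1 + c) + Real.sqrt c)) * hprod
  have hKK : 1 / (2 * Real.sqrt c) *
        Real.log ((Real.sqrt (1 + c) + Real.sqrt c) / (Real.sqrt (1 + c) - Real.sqrt c))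
      = (Real.sqrt c)⁻¹ * Real.log (Real.sqrt c + Real.sqrt (1 + c)) := by
    rw [hdiv, Real.log_pow, add_comm (Real.sqrt (1 + c))]
    push_cast
    field_simp
  set K : ℝ := Real.sqrt (1 + c) + (Real.sqrt c)⁻¹ *
    Real.log (Real.sqrt c + Real.sqrt (1 + c)) with hKdef
  have hrK : r = Real.sqrt (2 * (1 - a)) / Real.sin α * K⁻¹ := by rw [hr, hKK]
  have hlogpos : 0 ≤ Real.log (Real.sqrt c + Real.sqrt (1 + c)) := by
    apply Real.log_nonneg
    have h1 : Real.sqrt 1 ≤ Real.sqrt (1 + c) := Real.sqrt_le_sqrt (by linarith)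
    rw [Real.sqrt_one] at h1
    linarith
  have hK : 0 < K := by
    have h0 : 0 ≤ (Real.sqrt c)⁻¹ * Real.log (Real.sqrt c + Real.sqrt (1 + c)) := by positivity
    rw [hKdef]
    exact add_pos_of_pos_of_nonneg hp0 h0
  have hs2a : 0 < Real.sqrt (2 * (1 - a)) := Real.sqrt_pos.2 (by linarith)
  have hrpos : 0 < r := by
    rw [hrK]; positivity
  set A : ℝ := r ^ 2 * Real.sin α ^ 2 / (2 * (1 - a)) with hAdef
  have hA : 0 < A := by positivity
  have hBeq : r ^ 2 * Real.cos α ^ 2 / (1 - a) ^ 2 = A * (1 + c) := by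
    have h1c : 1 + c = 2 * (Real.cos α / Real.sin α) ^ 2 / (1 - a) := by
      rw [hc, Real.cot_eq_cos_div_sin]; ring
    rw [hAdef, h1c]
    field_simp
  have hfun : ∀ x : sphere (0:E3) 1,
      Real.sqrt (r ^ 2 * Real.sin α ^ 2 * ((x : E3) 0 ^ 2 + (x : E3) 1 ^ 2) / (2 * (1 - a)) +
          r ^ 2 * Real.cos α ^ 2 * (x : E3) 2 ^ 2 / (1 - a) ^ 2)
        = F A (A * (1 + c)) (x : E3) := by
    intro x
    rw [F, ← hBeq]
    congr 1
    rw [hAdef]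
    ring
  have hsphere : ∫ ω : sphere (0:E3) 1, F A (A * (1 + c)) ω ∂((volume : Measure E3).toSphere)
      = 2 * π * Real.sqrt A * K := by
    have hb := ball_to_sphere A (A * (1 + c))
    rw [ball_value A c hA hcpos, ← hKdef] at hb
    linear_combination -4 * hb
  calc (2 * Real.pi)⁻¹ *
      (∫ x : sphere (0:E3) 1,
        Real.sqrt (r ^ 2 * Real.sin α ^ 2 * ((x : E3) 0 ^ 2 + (x : E3) 1 ^ 2) / (2 * (1 - a)) +
          r ^ 2 * Real.cos α ^ 2 * (x : E3) 2 ^ 2 / (1 - a) ^ 2) ∂sphereMeasure)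
      = (2 * Real.pi)⁻¹ * (2 * π * Real.sqrt A * K) := by
        rw [show (∫ x : sphere (0:E3) 1,
            Real.sqrt (r ^ 2 * Real.sin α ^ 2 * ((x : E3) 0 ^ 2 + (x : E3) 1 ^ 2) / (2 * (1 - a)) +
              r ^ 2 * Real.cos α ^ 2 * (x : E3) 2 ^ 2 / (1 - a) ^ 2) ∂sphereMeasure)
            = ∫ ω : sphere (0:E3) 1, F A (A * (1 + c)) ω ∂((volume : Measure E3).toSphere) from
          integral_congr_ae (Filter.Eventually.of_forall fun x => hfun x), hsphere]
    _ = Real.sqrt A * K := by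
        field_simp
    _ = 1 := by
        have hsqA : Real.sqrt A = r * Real.sin α / Real.sqrt (2 * (1 - a)) := by
          rw [hAdef, show r ^ 2 * Real.sin α ^ 2 / (2 * (1 - a))
              = (r * Real.sin α / Real.sqrt (2 * (1 - a))) ^ 2 by
            rw [div_pow, mul_pow, Real.sq_sqrt (by linarith : (0:ℝ) ≤ 2 * (1 - a))],
            Real.sqrt_sq (by positivity)]
        rw [hsqA, hrK]
        field_simp
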